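/- arXiv:2308.01685 — 6 statements merged into one kernel-verified Lean document; each statement's English description precedes it below -/
import Mathlib

section
/- If G is a König–Egerváry graph (i.e., α(G) + μ(G) = n(G)), then a(G) - α(G) ≤ μ(G); moreover, if G has at least one edge, then a(G) - α(G) < μ(G). -/
open Finset

namespace AnnPaper

variable {V : Type*}

/-- A finset of vertices is independent: no two of its members are adjacent. -/
def IsIndepFinset (G : SimpleGraph V) (s : Finset V) : Prop :=
  ∀ a ∈ s, ∀ b ∈ s, ¬ G.Adj a b

/-- The independence number `α(G)`. -/
noncomputable def indepNum (G : SimpleGraph V) : ℕ :=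
  sSup {k | ∃ s : Finset V, IsIndepFinset G s ∧ s.card = k}

/-- A finset of edges is a matching: edges of `G`, pairwise vertex-disjoint. -/
def IsMatchingFinset (G : SimpleGraph V) (s : Finset (Sym2 V)) : Prop :=
  (↑s ⊆ G.edgeSet) ∧ ∀ e ∈ s, ∀ f ∈ s, e ≠ f → ∀ v : V, v ∈ e → v ∉ f

/-- The matching number `μ(G)`. -/
noncomputable def matchNum (G : SimpleGraph V) : ℕ :=
  sSup {k | ∃ s : Finset (Sym2 V), IsMatchingFinset G s ∧ s.card = k}

/-- The number of edges `m(G)`. -/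
noncomputable def edgeCount (G : SimpleGraph V) : ℕ := G.edgeSet.ncard

/-- The degree of a vertex. -/
noncomputable def deg (G : SimpleGraph V) (v : V) : ℕ := (G.neighborSet v).ncard

/-- The annihilation number `a(G)`: the largest `k` such that the sum of the `k`
smallest degrees is at most `m(G)`; equivalently, the largest cardinality of a
set of vertices whose degree sum is at most `m(G)`. -/
noncomputable def annNum (G : SimpleGraph V) : ℕ :=
  sSup {k | ∃ A : Finset V, A.card = k ∧ ∑ v ∈ A, deg G v ≤ edgeCount G}

/-- The number of edges of the subgraph induced on a set of vertices. -/
noncomputable def inducedEdgeCount (G : SimpleGraph V) (A : Set V) : ℕ :=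
  (SimpleGraph.induce A G).edgeSet.ncard

theorem stmt2 {V : Type*} [Fintype V] (G : SimpleGraph V)
    (hKE : indepNum G + matchNum G = Fintype.card V) :
    (annNum G : ℤ) - (indepNum G : ℤ) ≤ (matchNum G : ℤ) ∧
      (0 < edgeCount G → (annNum G : ℤ) - (indepNum G : ℤ) < (matchNum G : ℤ)) := by
  classical
  set S : Set ℕ := {k | ∃ A : Finset V, A.card = k ∧ ∑ v ∈ A, deg G v ≤ edgeCount G} with hS
  have hne : (0:ℕ) ∈ S := ⟨∅, by simp⟩
  have hbdd : ∀ k ∈ S, k ≤ Fintype.card V := by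
    rintro k ⟨A, rfl, -⟩
    exact A.card_le_univ.trans_eq (Finset.card_univ)
  have hann : annNum G ≤ Fintype.card V := csSup_le ⟨0, hne⟩ hbdd
  have hdeg : ∀ v, deg G v = G.degree v := by
    intro v
    rw [deg, Set.ncard_eq_toFinset_card']
    rfl
  have hedge : edgeCount G = G.edgeFinset.card := by
    rw [edgeCount, Set.ncard_eq_toFinset_card']
    exact congrArg Finset.card (by ext e; simp)
  constructor
  · omega
  intro hm
  have hmem : annNum G ∈ S := Nat.sSup_mem ⟨0, hne⟩ ⟨Fintype.card V, hbdd⟩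
  obtain ⟨A, hA, hsum⟩ := hmem
  have hlt : A.card < Fintype.card V := by
    rcases lt_or_eq_of_le A.card_le_univ with h | h
    · simpa using h
    · exfalso
      have hAuniv : A = Finset.univ := Finset.eq_univ_of_card A (by simpa using h)
      rw [hAuniv] at hsum
      have h2 : ∑ v, deg G v = 2 * edgeCount G := by
        simp only [hdeg, hedge]
        exact G.sum_degrees_eq_twice_card_edges
      omega
  omega

end AnnPaper
end

section
/- Let G be a bipartite graph with an annihilation decomposition ⟨A, B⟩ (A a maximum annihilating set of size a(G)). Then a(G) - α(G) ≤ m(G[A]), the number of edges in the subgraph induced by A. -/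
open Finset

namespace AnnPaper

variable {V : Type*}

/-- In any finite graph, there is an independent set of size ≥ n - m. -/
lemma exists_big_indep (W : Type*) [Fintype W] :
    ∀ n (H : SimpleGraph W), edgeCount H = n →
      ∃ s : Finset W, IsIndepFinset H s ∧ Fintype.card W ≤ s.card + n := by
  classical
  intro n
  induction n using Nat.strong_induction_on with
  | _ n ih =>
    intro H hn
    by_cases he : H.edgeSet = ∅
    · refine ⟨Finset.univ, ?_, ?_⟩
      · intro a _ b _ hab
        have : s(a, b) ∈ H.edgeSet := hab
        simp [he] at this
      · rw [Finset.card_univ]; omega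
    · obtain ⟨e, hemem⟩ := Set.nonempty_iff_ne_empty.2 he
      obtain ⟨a, b⟩ := e
      have hab : H.Adj a b := hemem
      set S : Set (Sym2 W) := {e : Sym2 W | a ∈ e} with hS
      set H' := H.deleteEdges S with hH'
      have hsub : H'.edgeSet ⊂ H.edgeSet := by
        rw [hH', SimpleGraph.edgeSet_deleteEdges]
        constructor
        · exact Set.diff_subset
        · intro hcontra
          have : s(a, b) ∈ H.edgeSet \ S := hcontra hemem
          exact this.2 (by rw [hS]; exact Sym2.mem_mk_left a b)
      have hlt : edgeCount H' < n := by
        rw [← hn]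
        exact Set.ncard_lt_ncard hsub (Set.toFinite _)
      obtain ⟨s, hsind, hscard⟩ := ih (edgeCount H') hlt H' rfl
      refine ⟨s.erase a, ?_, ?_⟩
      · intro u hu v hv huv
        have hu' := Finset.mem_of_mem_erase hu
        have hv' := Finset.mem_of_mem_erase hv
        have hua : u ≠ a := Finset.ne_of_mem_erase hu
        have hva : v ≠ a := Finset.ne_of_mem_erase hv
        apply hsind u hu' v hv'
        rw [hH', SimpleGraph.deleteEdges_adj]
        refine ⟨huv, ?_⟩
        simp only [hS, Set.mem_setOf_eq, Sym2.mem_iff]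
        push_neg
        exact ⟨fun h => hua h.symm, fun h => hva h.symm⟩
      · have h1 : s.card ≤ (s.erase a).card + 1 := by
          have := Finset.card_erase_add_one (a := a) (s := s)
          by_cases h : a ∈ s
          · have := Finset.card_erase_add_one h
            omega
          · have : (s.erase a).card = s.card := by
              rw [Finset.erase_eq_of_notMem h]
            omega
        omega

lemma indep_le_indepNum {V : Type*} [Fintype V] (G : SimpleGraph V)
    (s : Finset V) (hs : IsIndepFinset G s) : s.card ≤ indepNum G := by
  apply le_csSup
  · refine ⟨Fintype.card V, ?_⟩
    rintro k ⟨t, _, rfl⟩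
    exact Finset.card_le_univ t
  · exact ⟨s, hs, rfl⟩

theorem stmt5 {V : Type*} [Fintype V] (G : SimpleGraph V) (hbip : G.Colorable 2)
    (A : Finset V) (hcard : A.card = annNum G)
    (hdeg : ∑ v ∈ A, deg G v ≤ edgeCount G) :
    (annNum G : ℤ) - (indepNum G : ℤ) ≤ (inducedEdgeCount G (↑A : Set V) : ℤ) := by
  classical
  set H := SimpleGraph.induce (↑A : Set V) G with hH
  obtain ⟨s, hsind, hscard⟩ := exists_big_indep (↑A : Set V) (edgeCount H) H rfl
  have hcardA : Fintype.card (↑A : Set V) = A.card := Fintype.card_coe A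
  set t : Finset V := s.map ⟨Subtype.val, Subtype.val_injective⟩ with ht
  have htcard : t.card = s.card := Finset.card_map _
  have htind : IsIndepFinset G t := by
    intro u hu v hv huv
    rw [ht, Finset.mem_map] at hu hv
    obtain ⟨u', hu', rfl⟩ := hu
    obtain ⟨v', hv', rfl⟩ := hv
    exact hsind u' hu' v' hv' huv
  have h1 : t.card ≤ indepNum G := indep_le_indepNum G t htind
  have h2 : annNum G ≤ s.card + edgeCount H := by
    rw [← hcard, ← hcardA]; exact hscard
  have h3 : edgeCount H = inducedEdgeCount G (↑A : Set V) := rfl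
  have := h1
  omega

end AnnPaper
end

section
/- For each integer q ≥ 1, there exists a tree T with μ(T) = 2q+1, n(T) = 4q+2, α(T) = 2q+1, and a(T) = 3q+1, so that a(T) - α(T) = (μ(T)-1)/2; hence the bound a(T) - α(T) ≤ (μ(T)-1)/2 is tight for every odd matching number. -/
open Finset

namespace AnnPaper

variable {V : Type*}

/-! ### Auxiliary construction: the spider tree -/

/-- Adjacency on `ℕ`-labels: root `0` is adjacent to `1, …, 2q+1`; each middle
vertex `v ∈ [2, 2q+1]` is adjacent to its pendant leaf `v + 2q`. -/
def adjN (q x y : ℕ) : Prop :=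
  (x = 0 ∧ 1 ≤ y ∧ y ≤ 2*q+1) ∨ (y = 0 ∧ 1 ≤ x ∧ x ≤ 2*q+1) ∨
  (2 ≤ x ∧ x ≤ 2*q+1 ∧ y = x + 2*q) ∨ (2 ≤ y ∧ y ≤ 2*q+1 ∧ x = y + 2*q)

instance (q x y : ℕ) : Decidable (adjN q x y) := by unfold adjN; infer_instance

/-- The spider tree on `4q+2` vertices. -/
def TG (q : ℕ) : SimpleGraph (Fin (4*q+2)) where
  Adj x y := adjN q x.val y.val
  symm := by constructor; intro x y h; unfold adjN at *; omega
  loopless := by constructor; intro x h; unfold adjN at h; omega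

instance TGdec (q : ℕ) : DecidableRel (TG q).Adj :=
  fun x y => inferInstanceAs (Decidable (adjN q x.val y.val))

lemma card_filter_val {n : ℕ} (p : ℕ → Prop) [DecidablePred p] :
    ((univ : Finset (Fin n)).filter (fun x => p x.val)).card
      = ((Finset.range n).filter p).card := by
  rw [Finset.card_filter, Finset.card_filter]
  exact Fin.sum_univ_eq_sum_range (fun i => if p i then 1 else 0) n

lemma sum_filter_val {n : ℕ} (p : ℕ → Prop) [DecidablePred p] (g : ℕ → ℕ) :
    (∑ x ∈ (univ : Finset (Fin n)).filter (fun x => p x.val), g x.val)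
      = ∑ i ∈ (Finset.range n).filter p, g i := by
  rw [Finset.sum_filter, Finset.sum_filter]
  exact Fin.sum_univ_eq_sum_range (fun i => if p i then g i else 0) n

/-- Degrees in the spider tree, as a function of the `ℕ`-label. -/
def Dg (q i : ℕ) : ℕ := if i = 0 then 2*q+1 else if 2 ≤ i ∧ i ≤ 2*q+1 then 2 else 1

lemma deg_TG (q : ℕ) (hq : 1 ≤ q) (v : Fin (4*q+2)) : deg (TG q) v = Dg q v.val := by
  have hv := v.isLt
  have hset : (TG q).neighborSet v
      = ↑((univ : Finset (Fin (4*q+2))).filter (fun x => adjN q v.val x.val)) := by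
    ext x
    simp only [SimpleGraph.mem_neighborSet, Finset.coe_filter, Finset.mem_univ, true_and,
      Set.mem_setOf_eq]
    exact Iff.rfl
  rw [deg, hset, Set.ncard_coe_finset, card_filter_val (fun w => adjN q v.val w)]
  rcases Nat.lt_or_ge v.val 1 with h | h
  · rw [show (Finset.range (4*q+2)).filter (fun w => adjN q v.val w) = Finset.Ico 1 (2*q+2) by
      ext w; rw [Finset.mem_filter]; simp only [Finset.mem_filter, Finset.mem_range, Finset.mem_Ico, adjN]; omega]
    rw [Nat.card_Ico]; unfold Dg; split_ifs <;> omega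
  · rcases Nat.lt_or_ge v.val 2 with h2 | h2
    · rw [show (Finset.range (4*q+2)).filter (fun w => adjN q v.val w) = {0} by
        ext w; rw [Finset.mem_filter]; simp only [Finset.mem_filter, Finset.mem_range, Finset.mem_singleton, adjN]; omega]
      rw [Finset.card_singleton]; unfold Dg; split_ifs <;> omega
    · rcases Nat.lt_or_ge (2*q+1) v.val with h3 | h3
      · rw [show (Finset.range (4*q+2)).filter (fun w => adjN q v.val w) = {v.val - 2*q} by
          ext w; rw [Finset.mem_filter]; simp only [Finset.mem_filter, Finset.mem_range, Finset.mem_singleton, adjN]; omega]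
        rw [Finset.card_singleton]; unfold Dg; split_ifs <;> omega
      · rw [show (Finset.range (4*q+2)).filter (fun w => adjN q v.val w) = {0, v.val + 2*q} by
          ext w; rw [Finset.mem_filter]; simp only [Finset.mem_filter, Finset.mem_range, Finset.mem_insert,
            Finset.mem_singleton, adjN]; omega]
        rw [Finset.card_insert_of_notMem (by simp only [Finset.mem_singleton]; omega),
          Finset.card_singleton]
        unfold Dg; split_ifs <;> omega

lemma deg_eq_degree (q : ℕ) (v : Fin (4*q+2)) : deg (TG q) v = (TG q).degree v := by
  rw [deg, Set.ncard_eq_toFinset_card', Set.toFinset_card, SimpleGraph.card_neighborSet_eq_degree]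

lemma edgeCount_TG (q : ℕ) (hq : 1 ≤ q) : edgeCount (TG q) = 4*q+1 := by
  have hdeg : ∀ v : Fin (4*q+2), (TG q).degree v = Dg q v.val := fun v => by
    rw [← deg_eq_degree, deg_TG q hq]
  have hsum : ∑ v : Fin (4*q+2), (TG q).degree v = 2*(4*q+1) := by
    rw [Finset.sum_congr rfl (fun v _ => hdeg v),
      Fin.sum_univ_eq_sum_range (fun i => Dg q i)]
    have hsplit : ∀ i, Dg q i = 1 + (if 2 ≤ i ∧ i ≤ 2*q+1 then 1 else 0)
        + (if i = 0 then 2*q else 0) := by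
      intro i; unfold Dg; split_ifs <;> omega
    rw [Finset.sum_congr rfl (fun i _ => hsplit i), Finset.sum_add_distrib,
      Finset.sum_add_distrib, Finset.sum_const, Finset.sum_ite_eq' (Finset.range (4*q+2)) 0
        (fun _ => 2*q), ← Finset.card_filter]
    rw [show (Finset.range (4*q+2)).filter (fun i => 2 ≤ i ∧ i ≤ 2*q+1) = Finset.Ico 2 (2*q+2) by
      ext i; simp only [Finset.mem_filter, Finset.mem_range, Finset.mem_Ico]; omega]
    simp only [Finset.card_range, Nat.card_Ico, smul_eq_mul, Finset.mem_range]
    split_ifs <;> omega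
  have h2 := SimpleGraph.sum_degrees_eq_twice_card_edges (TG q)
  have hef : (TG q).edgeFinset.card = 4*q+1 := by omega
  rw [edgeCount, Set.ncard_eq_toFinset_card']
  simpa [SimpleGraph.edgeFinset] using hef

lemma sSup_eq_of_mem_of_ub {S : Set ℕ} {t : ℕ} (ht : t ∈ S) (hub : ∀ k ∈ S, k ≤ t) :
    sSup S = t :=
  le_antisymm (csSup_le ⟨t, ht⟩ hub) (le_csSup ⟨t, hub⟩ ht)

lemma card_filter_mem_sym2 {W : Type*} [Fintype W] [DecidableEq W] {e : Sym2 W}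
    (hd : ¬ e.IsDiag) : ((univ : Finset W).filter (· ∈ e)).card = 2 := by
  induction e using Sym2.ind with
  | _ a b =>
    have hab : a ≠ b := fun h => hd (Sym2.mk_isDiag_iff.2 h)
    rw [show (univ : Finset W).filter (· ∈ s(a,b)) = {a, b} by
      ext x; simp [Sym2.mem_iff]]
    exact Finset.card_pair hab

lemma matching_card_bound {n : ℕ} {G : SimpleGraph (Fin n)}
    {s : Finset (Sym2 (Fin n))} (h : IsMatchingFinset G s) : 2 * s.card ≤ n := by
  classical
  have hdisj : ∀ e ∈ s, ∀ f ∈ s, e ≠ f →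
      Disjoint ((univ : Finset (Fin n)).filter (· ∈ e))
        ((univ : Finset (Fin n)).filter (· ∈ f)) := by
    intro e he f hf hef
    rw [Finset.disjoint_left]
    intro v hv hv'
    exact h.2 e he f hf hef v (by simpa using hv) (by simpa using hv')
  have hcard := Finset.card_biUnion hdisj
  have hle : (s.biUnion fun e => (univ : Finset (Fin n)).filter (· ∈ e)).card ≤ n := by
    simpa using Finset.card_le_univ (s.biUnion fun e => (univ : Finset (Fin n)).filter (· ∈ e))
  rw [hcard] at hle
  calc 2 * s.card = ∑ _e ∈ s, 2 := by rw [Finset.sum_const, smul_eq_mul, mul_comm]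
    _ = ∑ e ∈ s, ((univ : Finset (Fin n)).filter (· ∈ e)).card :=
        Finset.sum_congr rfl fun e he =>
          (card_filter_mem_sym2 (G.not_isDiag_of_mem_edgeSet (h.1 he))).symm
    _ ≤ n := hle

/-- The edges of an explicit perfect matching of the spider tree. -/
def medge (q : ℕ) (k : Fin (2*q+1)) : Sym2 (Fin (4*q+2)) :=
  if k.val = 0 then s(⟨0, by omega⟩, ⟨1, by omega⟩)
  else s(⟨k.val + 1, by have := k.isLt; omega⟩, ⟨k.val + 2*q + 1, by have := k.isLt; omega⟩)

lemma medge_inj (q : ℕ) (hq : 1 ≤ q) : Function.Injective (medge q) := by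
  intro k k' h
  have hk := k.isLt; have hk' := k'.isLt
  unfold medge at h
  apply Fin.ext
  split_ifs at h <;> simp only [Sym2.eq_iff, Fin.mk.injEq] at h <;> omega

lemma matching_M (q : ℕ) (hq : 1 ≤ q) :
    IsMatchingFinset (TG q) ((univ : Finset (Fin (2*q+1))).image (medge q)) := by
  constructor
  · intro e he
    simp only [Finset.coe_image, Set.mem_image, Finset.coe_univ, Set.image_univ,
      Set.mem_range] at he
    obtain ⟨k, rfl⟩ := he
    have hk := k.isLt
    unfold medge
    split_ifs with h
    · rw [SimpleGraph.mem_edgeSet]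
      show adjN q 0 1
      unfold adjN; omega
    · rw [SimpleGraph.mem_edgeSet]
      show adjN q (k.val+1) (k.val+2*q+1)
      unfold adjN; omega
  · intro e he f hf hef v hv hvf
    simp only [Finset.mem_image, Finset.mem_univ, true_and] at he hf
    obtain ⟨k, rfl⟩ := he
    obtain ⟨k', rfl⟩ := hf
    have hkk : k.val ≠ k'.val := fun h => hef (by rw [Fin.ext h])
    have hk := k.isLt; have hk' := k'.isLt
    have hvlt := v.isLt
    unfold medge at hv hvf
    split_ifs at hv hvf <;>
      simp only [Sym2.mem_iff, Fin.ext_iff] at hv hvf <;> omega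

lemma matchNum_TG (q : ℕ) (hq : 1 ≤ q) : matchNum (TG q) = 2*q+1 := by
  apply sSup_eq_of_mem_of_ub
  · exact ⟨_, matching_M q hq, by
      rw [Finset.card_image_of_injective _ (medge_inj q hq), Finset.card_univ,
        Fintype.card_fin]⟩
  · rintro k ⟨s, hs, rfl⟩
    have := matching_card_bound hs
    omega

lemma indep_ub (q : ℕ) (hq : 1 ≤ q) {s : Finset (Fin (4*q+2))}
    (hs : IsIndepFinset (TG q) s) : s.card ≤ 2*q+1 := by
  have h2q : (Finset.range (2*q+1)).card = 2*q+1 := Finset.card_range _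
  rw [← h2q]
  apply Finset.card_le_card_of_injOn
    (fun x => if x.val ≤ 1 then 0 else if x.val ≤ 2*q+1 then x.val - 1 else x.val - (2*q+1))
  · intro a ha
    have := a.isLt
    simp only [Finset.mem_coe, Finset.mem_range]
    split_ifs <;> omega
  · intro a ha b hb hfab
    by_contra hne
    have hval : a.val ≠ b.val := fun h => hne (Fin.ext h)
    have hnadj : ¬ adjN q a.val b.val := hs a ha b hb
    unfold adjN at hnadj
    have ha' := a.isLt; have hb' := b.isLt
    simp only at hfab
    split_ifs at hfab <;> omega

lemma leafcard (q : ℕ) (hq : 1 ≤ q) :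
    ((univ : Finset (Fin (4*q+2))).filter (fun x => x.val = 1 ∨ 2*q+2 ≤ x.val)).card
      = 2*q+1 := by
  rw [card_filter_val (fun i => i = 1 ∨ 2*q+2 ≤ i)]
  rw [show (Finset.range (4*q+2)).filter (fun i => i = 1 ∨ 2*q+2 ≤ i)
        = insert 1 (Finset.Ico (2*q+2) (4*q+2)) by
      ext i; simp only [Finset.mem_filter, Finset.mem_range, Finset.mem_insert,
        Finset.mem_Ico]; omega]
  rw [Finset.card_insert_of_notMem (by simp only [Finset.mem_Ico]; omega), Nat.card_Ico]
  omega

lemma indepNum_TG (q : ℕ) (hq : 1 ≤ q) : indepNum (TG q) = 2*q+1 := by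
  apply sSup_eq_of_mem_of_ub
  · refine ⟨(univ : Finset (Fin (4*q+2))).filter (fun x => x.val = 1 ∨ 2*q+2 ≤ x.val),
      ?_, leafcard q hq⟩
    intro a ha b hb hadj
    simp only [Finset.mem_filter, Finset.mem_univ, true_and] at ha hb
    have hadj' : adjN q a.val b.val := hadj
    have := a.isLt; have := b.isLt
    unfold adjN at hadj'; omega
  · rintro k ⟨s, hs, rfl⟩
    exact indep_ub q hq hs

lemma annNum_TG (q : ℕ) (hq : 1 ≤ q) : annNum (TG q) = 3*q+1 := by
  apply sSup_eq_of_mem_of_ub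
  · refine ⟨(univ : Finset (Fin (4*q+2))).filter
      (fun x => x.val = 1 ∨ 2*q+2 ≤ x.val ∨ (2 ≤ x.val ∧ x.val ≤ q+1)), ?_, ?_⟩
    · rw [card_filter_val (fun i => i = 1 ∨ 2*q+2 ≤ i ∨ (2 ≤ i ∧ i ≤ q+1))]
      rw [show (Finset.range (4*q+2)).filter (fun i => i = 1 ∨ 2*q+2 ≤ i ∨ (2 ≤ i ∧ i ≤ q+1))
            = insert 1 (Finset.Ico 2 (q+2) ∪ Finset.Ico (2*q+2) (4*q+2)) by
          ext i; simp only [Finset.mem_filter, Finset.mem_range, Finset.mem_insert,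
            Finset.mem_union, Finset.mem_Ico]; omega]
      rw [Finset.card_insert_of_notMem (by
          simp only [Finset.mem_union, Finset.mem_Ico]; omega),
        Finset.card_union_of_disjoint (by
          rw [Finset.disjoint_left]; intro x hx hx'
          simp only [Finset.mem_Ico] at hx hx'; omega),
        Nat.card_Ico, Nat.card_Ico]
      omega
    · rw [edgeCount_TG q hq, Finset.sum_congr rfl (fun v _ => deg_TG q hq v),
        sum_filter_val (fun i => i = 1 ∨ 2*q+2 ≤ i ∨ (2 ≤ i ∧ i ≤ q+1)) (Dg q)]
      rw [show (Finset.range (4*q+2)).filter (fun i => i = 1 ∨ 2*q+2 ≤ i ∨ (2 ≤ i ∧ i ≤ q+1))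
            = insert 1 (Finset.Ico 2 (q+2) ∪ Finset.Ico (2*q+2) (4*q+2)) by
          ext i; simp only [Finset.mem_filter, Finset.mem_range, Finset.mem_insert,
            Finset.mem_union, Finset.mem_Ico]; omega]
      rw [Finset.sum_insert (by simp only [Finset.mem_union, Finset.mem_Ico]; omega),
        Finset.sum_union (by
          rw [Finset.disjoint_left]; intro x hx hx'
          simp only [Finset.mem_Ico] at hx hx'; omega)]
      have e1 : ∑ i ∈ Finset.Ico 2 (q+2), Dg q i = ∑ _i ∈ Finset.Ico 2 (q+2), 2 :=
        Finset.sum_congr rfl (fun i hi => by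
          simp only [Finset.mem_Ico] at hi; unfold Dg; split_ifs <;> omega)
      have e2 : ∑ i ∈ Finset.Ico (2*q+2) (4*q+2), Dg q i
          = ∑ _i ∈ Finset.Ico (2*q+2) (4*q+2), 1 :=
        Finset.sum_congr rfl (fun i hi => by
          simp only [Finset.mem_Ico] at hi; unfold Dg; split_ifs <;> omega)
      rw [e1, e2]
      simp only [Finset.sum_const, Nat.card_Ico, smul_eq_mul]
      have hD1 : Dg q 1 = 1 := by simp [Dg]
      rw [hD1]
      omega
  · rintro k ⟨A, rfl, hsum⟩
    rw [edgeCount_TG q hq, Finset.sum_congr rfl (fun v _ => deg_TG q hq v)] at hsum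
    have key : ∀ v : Fin (4*q+2),
        2 ≤ Dg q v.val + (if v.val = 1 ∨ 2*q+2 ≤ v.val then 1 else 0) := by
      intro v; have := v.isLt; unfold Dg; split_ifs <;> omega
    have h1 : 2 * A.card ≤ ∑ v ∈ A, Dg q v.val
        + ∑ v ∈ A, (if v.val = 1 ∨ 2*q+2 ≤ v.val then 1 else 0) := by
      rw [← Finset.sum_add_distrib]
      calc 2 * A.card = ∑ _v ∈ A, 2 := by rw [Finset.sum_const, smul_eq_mul, mul_comm]
        _ ≤ _ := Finset.sum_le_sum (fun v _ => key v)
    have h2 : ∑ v ∈ A, (if v.val = 1 ∨ 2*q+2 ≤ v.val then 1 else 0) ≤ 2*q+1 := by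
      rw [← Finset.card_filter]
      calc (A.filter (fun v => v.val = 1 ∨ 2*q+2 ≤ v.val)).card
          ≤ ((univ : Finset (Fin (4*q+2))).filter (fun x => x.val = 1 ∨ 2*q+2 ≤ x.val)).card :=
            Finset.card_le_card (Finset.filter_subset_filter _ (Finset.subset_univ A))
        _ = 2*q+1 := leafcard q hq
    omega

lemma connected_TG (q : ℕ) (hq : 1 ≤ q) : (TG q).Connected := by
  rw [SimpleGraph.connected_iff]
  have hroot : ∀ x : Fin (4*q+2), (TG q).Reachable x ⟨0, by omega⟩ := by
    intro x
    have hx := x.isLt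
    rcases Nat.lt_or_ge x.val 1 with h | h
    · have hx0 : x = ⟨0, by omega⟩ := Fin.ext (show x.val = 0 by omega)
      rw [hx0]
    · rcases Nat.lt_or_ge x.val (2*q+2) with h2 | h2
      · exact (show (TG q).Adj x ⟨0, by omega⟩ from by
          show adjN q x.val 0; unfold adjN; omega).reachable
      · have h3 : (TG q).Adj x ⟨x.val - 2*q, by omega⟩ := by
          show adjN q x.val (x.val - 2*q); unfold adjN; omega
        have h4 : (TG q).Adj (⟨x.val - 2*q, by omega⟩ : Fin (4*q+2)) ⟨0, by omega⟩ := by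
          show adjN q (x.val - 2*q) 0; unfold adjN; omega
        exact h3.reachable.trans h4.reachable
  exact ⟨fun x y => (hroot x).trans (hroot y).symm, ⟨⟨0, by omega⟩⟩⟩

lemma closed_reach {W : Type*} {G : SimpleGraph W} {S : Set W}
    (hS : ∀ a ∈ S, ∀ b, G.Adj a b → b ∈ S) {u v : W} (h : G.Reachable u v) :
    u ∈ S → v ∈ S := by
  obtain ⟨w⟩ := h
  induction w with
  | nil => exact id
  | cons h p ih => exact fun hu => ih (hS _ hu _ h)

lemma no_reach_aux {W : Type*} {G : SimpleGraph W} {S : Set W} {u v : W}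
    (hS : ∀ a ∈ S, ∀ b, G.Adj a b → b ∈ S)
    (hu : u ∈ S) (hv : v ∉ S) : ¬ G.Reachable u v :=
  fun h => hv (closed_reach hS h hu)

lemma acyclic_TG (q : ℕ) (hq : 1 ≤ q) : (TG q).IsAcyclic := by
  rw [SimpleGraph.isAcyclic_iff_forall_adj_isBridge]
  intro u v huv
  rw [SimpleGraph.isBridge_iff]
  refine ?_
  have hu := u.isLt; have hv := v.isLt
  have hadj : adjN q u.val v.val := huv
  have hadj' : ∀ a b : Fin (4*q+2),
      ((TG q) \ SimpleGraph.fromEdgeSet {s(u, v)}).Adj a b →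
      adjN q a.val b.val ∧
        ¬((a.val = u.val ∧ b.val = v.val) ∨ (a.val = v.val ∧ b.val = u.val)) := by
    intro a b hab
    simp only [SimpleGraph.sdiff_adj, SimpleGraph.fromEdgeSet_adj,
      Set.mem_singleton_iff] at hab
    obtain ⟨h1, h2⟩ := hab
    refine ⟨h1, ?_⟩
    intro hor
    apply h2
    refine ⟨?_, h1.ne⟩
    rw [Sym2.eq_iff]
    rcases hor with ⟨ha, hb⟩ | ⟨ha, hb⟩
    · exact Or.inl ⟨Fin.ext ha, Fin.ext hb⟩
    · exact Or.inr ⟨Fin.ext ha, Fin.ext hb⟩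
  unfold adjN at hadj
  rcases hadj with ⟨h1, h2, h3⟩ | ⟨h1, h2, h3⟩ | ⟨h1, h2, h3⟩ | ⟨h1, h2, h3⟩
  · rcases Nat.lt_or_ge v.val 2 with hv2 | hv2
    · refine no_reach_aux (S := {x : Fin (4*q+2) | x.val ≠ 1}) ?_ ?_ ?_
      · intro a ha b hab
        obtain ⟨hab1, hab2⟩ := hadj' a b hab
        have ha' : a.val ≠ 1 := ha
        show b.val ≠ 1
        have := a.isLt; have := b.isLt
        unfold adjN at hab1; omega
      · show u.val ≠ 1; omega
      · show ¬ (v.val ≠ 1); omega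
    · refine no_reach_aux
        (S := {x : Fin (4*q+2) | x.val ≠ v.val ∧ x.val ≠ v.val + 2*q}) ?_ ?_ ?_
      · intro a ha b hab
        obtain ⟨hab1, hab2⟩ := hadj' a b hab
        have ha' : a.val ≠ v.val ∧ a.val ≠ v.val + 2*q := ha
        show b.val ≠ v.val ∧ b.val ≠ v.val + 2*q
        have := a.isLt; have := b.isLt
        unfold adjN at hab1; omega
      · show u.val ≠ v.val ∧ u.val ≠ v.val + 2*q; omega
      · show ¬ (v.val ≠ v.val ∧ v.val ≠ v.val + 2*q); omega
  · rcases Nat.lt_or_ge u.val 2 with hu2 | hu2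
    · refine no_reach_aux (S := {x : Fin (4*q+2) | x.val = 1}) ?_ ?_ ?_
      · intro a ha b hab
        obtain ⟨hab1, hab2⟩ := hadj' a b hab
        have ha' : a.val = 1 := ha
        show b.val = 1
        have := a.isLt; have := b.isLt
        unfold adjN at hab1; omega
      · show u.val = 1; omega
      · show ¬ (v.val = 1); omega
    · refine no_reach_aux
        (S := {x : Fin (4*q+2) | x.val = u.val ∨ x.val = u.val + 2*q}) ?_ ?_ ?_
      · intro a ha b hab
        obtain ⟨hab1, hab2⟩ := hadj' a b hab
        have ha' : a.val = u.val ∨ a.val = u.val + 2*q := ha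
        show b.val = u.val ∨ b.val = u.val + 2*q
        have := a.isLt; have := b.isLt
        unfold adjN at hab1; omega
      · show u.val = u.val ∨ u.val = u.val + 2*q; omega
      · show ¬ (v.val = u.val ∨ v.val = u.val + 2*q); omega
  · refine no_reach_aux (S := {x : Fin (4*q+2) | x.val ≠ v.val}) ?_ ?_ ?_
    · intro a ha b hab
      obtain ⟨hab1, hab2⟩ := hadj' a b hab
      have ha' : a.val ≠ v.val := ha
      show b.val ≠ v.val
      have := a.isLt; have := b.isLt
      unfold adjN at hab1; omega
    · show u.val ≠ v.val; omega
    · show ¬ (v.val ≠ v.val); omega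
  · refine no_reach_aux (S := {x : Fin (4*q+2) | x.val = u.val}) ?_ ?_ ?_
    · intro a ha b hab
      obtain ⟨hab1, hab2⟩ := hadj' a b hab
      have ha' : a.val = u.val := ha
      show b.val = u.val
      have := a.isLt; have := b.isLt
      unfold adjN at hab1; omega
    · show u.val = u.val; omega
    · show ¬ (v.val = u.val); omega

theorem stmt8 (q : ℕ) (hq : 1 ≤ q) :
    ∃ T : SimpleGraph (Fin (4 * q + 2)), T.IsTree ∧
      matchNum T = 2 * q + 1 ∧ indepNum T = 2 * q + 1 ∧ annNum T = 3 * q + 1 ∧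
      (annNum T : ℚ) - (indepNum T : ℚ) = ((matchNum T : ℚ) - 1) / 2 := by
  refine ⟨TG q, ⟨connected_TG q hq, acyclic_TG q hq⟩, matchNum_TG q hq,
    indepNum_TG q hq, annNum_TG q hq, ?_⟩
  rw [matchNum_TG q hq, indepNum_TG q hq, annNum_TG q hq]
  push_cast
  ring

end AnnPaper
end

section
/- There exists a bipartite graph G (on 32 vertices) with a(G) = 25, α(G) = 16, μ(G) = 16 such that a(G) - α(G) > (μ(G) - 1)/2; hence the tree bound fails for bipartite graphs. -/
set_option maxRecDepth 4000

open Finset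

namespace AnnPaper

variable {V : Type*}

/-! ### The construction -/

def adjP (x y : ℕ) : Prop :=
  (x < 16 ∧ y = x + 16) ∨ (16 ≤ x ∧ x < 24 ∧ y = 28 + (x - 16) / 2) ∨
  (24 ≤ x ∧ x < 28 ∧ 28 ≤ y ∧ y < 32)

instance : ∀ x y, Decidable (adjP x y) := fun x y => by unfold adjP; infer_instance

def myG : SimpleGraph (Fin 32) where
  Adj u v := adjP u.val v.val ∨ adjP v.val u.val
  symm := ⟨fun _ _ h => h.symm⟩
  loopless := ⟨fun v => by revert v; decide⟩

instance : DecidableRel myG.Adj := fun u v => inferInstanceAs (Decidable (adjP u.val v.val ∨ adjP v.val u.val))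

lemma deg_eq (v : Fin 32) : deg myG v = myG.degree v := by
  rw [deg, Set.ncard_eq_toFinset_card']; rfl

lemma sum_deg80 : ∑ v : Fin 32, myG.degree v = 80 := by decide

lemma edgeCount_eq : edgeCount myG = 40 := by
  have h1 : edgeCount myG = myG.edgeFinset.card := by
    rw [edgeCount, Set.ncard_eq_toFinset_card']
    simp [SimpleGraph.edgeFinset]
  have h := myG.sum_degrees_eq_twice_card_edges
  rw [sum_deg80] at h
  omega

/-! ### annNum -/

lemma annNum_myG : annNum myG = 25 := by
  have hmem : 25 ∈ {k | ∃ A : Finset (Fin 32), A.card = k ∧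
      ∑ v ∈ A, deg myG v ≤ edgeCount myG} := by
    refine ⟨Finset.univ.filter (fun v : Fin 32 => v.val < 25), by decide, ?_⟩
    rw [edgeCount_eq]
    simp only [deg_eq]
    have : ∑ v ∈ Finset.univ.filter (fun v : Fin 32 => v.val < 25), myG.degree v = 37 := by
      decide
    omega
  have hub : ∀ k ∈ {k | ∃ A : Finset (Fin 32), A.card = k ∧
      ∑ v ∈ A, deg myG v ≤ edgeCount myG}, k ≤ 25 := by
    rintro k ⟨A, rfl, hsum⟩
    by_contra h
    push_neg at h
    rw [edgeCount_eq] at hsum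
    simp only [deg_eq] at hsum
    have hsplit : ∑ v ∈ A, myG.degree v + ∑ v ∈ Aᶜ, myG.degree v = 80 := by
      rw [Finset.sum_add_sum_compl, sum_deg80]
    have hcard : Aᶜ.card = 32 - A.card := by
      rw [Finset.card_compl]; rfl
    have hle5 : ∀ v : Fin 32, myG.degree v ≤ 5 + (myG.degree v - 5) := by
      intro v; omega
    have h1 : ∑ v ∈ Aᶜ, myG.degree v ≤ ∑ v ∈ Aᶜ, (5 + (myG.degree v - 5)) :=
      Finset.sum_le_sum fun v _ => hle5 v
    rw [Finset.sum_add_distrib, Finset.sum_const, smul_eq_mul] at h1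
    have h2 : ∑ v ∈ Aᶜ, (myG.degree v - 5) ≤ ∑ v : Fin 32, (myG.degree v - 5) :=
      Finset.sum_le_sum_of_subset (Finset.subset_univ _)
    have h3 : ∑ v : Fin 32, (myG.degree v - 5) = 8 := by decide
    have hA32 : A.card ≤ 32 := le_trans (Finset.card_le_univ A) (by simp)
    omega
  refine le_antisymm (csSup_le ⟨25, hmem⟩ hub) (le_csSup ⟨25, hub⟩ hmem)

/-! ### indepNum -/

def invo : Fin 32 → Fin 32 := fun v => if v.val < 16 then v + 16 else v - 16

lemma indepNum_myG : indepNum myG = 16 := by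
  have hmem : 16 ∈ {k | ∃ s : Finset (Fin 32), IsIndepFinset myG s ∧ s.card = k} := by
    refine ⟨Finset.univ.filter (fun v : Fin 32 => v.val < 16), ?_, by decide⟩
    show ∀ a ∈ _, ∀ b ∈ _, ¬ myG.Adj a b
    decide
  have hub : ∀ k ∈ {k | ∃ s : Finset (Fin 32), IsIndepFinset myG s ∧ s.card = k},
      k ≤ 16 := by
    rintro k ⟨s, hs, rfl⟩
    have hinv : Function.Involutive invo := fun v => by revert v; decide
    have hadj : ∀ v : Fin 32, myG.Adj v (invo v) := by decide
    have hdisj : Disjoint s (s.image invo) := by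
      rw [Finset.disjoint_left]
      intro x hx hx'
      obtain ⟨w, hw, rfl⟩ := Finset.mem_image.mp hx'
      exact hs w hw (invo w) hx (hadj w)
    have hcard : (s ∪ s.image invo).card = s.card + (s.image invo).card :=
      Finset.card_union_of_disjoint hdisj
    have himg : (s.image invo).card = s.card :=
      Finset.card_image_of_injective _ hinv.injective
    have h32 : (s ∪ s.image invo).card ≤ 32 :=
      le_trans (Finset.card_le_univ _) (by simp)
    omega
  refine le_antisymm (csSup_le ⟨16, hmem⟩ hub) (le_csSup ⟨16, hub⟩ hmem)

/-! ### matchNum -/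

def M : Finset (Sym2 (Fin 32)) :=
  (Finset.univ.filter (fun v : Fin 32 => v.val < 16)).image (fun v => s(v, v + 16))

lemma M_matching : IsMatchingFinset myG M := by
  constructor
  · intro e he
    rw [Finset.mem_coe] at he
    obtain ⟨v, hv, rfl⟩ := Finset.mem_image.mp he
    rw [SimpleGraph.mem_edgeSet]
    have h : ∀ v : Fin 32, v.val < 16 → myG.Adj v (v + 16) := by decide
    exact h v (by simpa using hv)
  · intro e he f hf hef x hx hxf
    obtain ⟨v, hv, rfl⟩ := Finset.mem_image.mp he
    obtain ⟨w, hw, rfl⟩ := Finset.mem_image.mp hf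
    have hv' : v.val < 16 := by simpa using hv
    have hw' : w.val < 16 := by simpa using hw
    have ne16 : ∀ a b : Fin 32, a.val < 16 → b.val < 16 → a ≠ b + 16 := by decide
    rw [Sym2.mem_iff] at hx hxf
    rcases hx with rfl | rfl <;> rcases hxf with h | h
    · exact hef (by rw [h])
    · exact ne16 x w hv' hw' h
    · exact ne16 w v hw' hv' h.symm
    · exact hef (by rw [add_right_cancel (a := v) (b := (16:Fin 32)) h])

lemma matchNum_myG : matchNum myG = 16 := by
  have hmem : 16 ∈ {k | ∃ s : Finset (Sym2 (Fin 32)), IsMatchingFinset myG s ∧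
      s.card = k} := ⟨M, M_matching, by decide⟩
  have hub : ∀ k ∈ {k | ∃ s : Finset (Sym2 (Fin 32)), IsMatchingFinset myG s ∧
      s.card = k}, k ≤ 16 := by
    rintro k ⟨s, ⟨hsub, hdisj⟩, rfl⟩
    set F : Sym2 (Fin 32) → Finset (Fin 32) := fun e => Finset.univ.filter (· ∈ e) with hF
    have hFcard : ∀ e ∈ s, (F e).card = 2 := by
      intro e he
      induction e using Sym2.ind with
      | _ a b =>
        have hab : a ≠ b := by
          have : s(a, b) ∈ myG.edgeSet := hsub (Finset.mem_coe.mpr he)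
          rw [SimpleGraph.mem_edgeSet] at this
          exact myG.ne_of_adj this
        have : F s(a, b) = {a, b} := by
          ext x
          simp [hF, Sym2.mem_iff]
        rw [this, Finset.card_insert_of_notMem (by simpa using hab),
          Finset.card_singleton]
    have hFd : ∀ e ∈ s, ∀ f ∈ s, e ≠ f → Disjoint (F e) (F f) := by
      intro e he f hf hef
      rw [Finset.disjoint_left]
      intro x hx hx'
      rw [hF, Finset.mem_filter] at hx hx'
      exact hdisj e he f hf hef x hx.2 hx'.2
    have hbu : (s.biUnion F).card = ∑ e ∈ s, (F e).card := Finset.card_biUnion hFd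
    have hsum : ∑ e ∈ s, (F e).card = 2 * s.card := by
      rw [Finset.sum_congr rfl hFcard, Finset.sum_const, smul_eq_mul, Nat.mul_comm]
    have h32 : (s.biUnion F).card ≤ 32 := le_trans (Finset.card_le_univ _) (by simp)
    omega
  refine le_antisymm (csSup_le ⟨16, hmem⟩ hub) (le_csSup ⟨16, hub⟩ hmem)

theorem stmt10 :
    ∃ G : SimpleGraph (Fin 32), G.Colorable 2 ∧
      annNum G = 25 ∧ indepNum G = 16 ∧ matchNum G = 16 ∧
      ((matchNum G : ℚ) - 1) / 2 < (annNum G : ℚ) - (indepNum G : ℚ) := by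
  refine ⟨myG, ?_, annNum_myG, indepNum_myG, matchNum_myG, ?_⟩
  · refine ⟨SimpleGraph.Coloring.mk (fun v => if v.val < 12 ∨ 28 ≤ v.val then 0 else 1) ?_⟩
    have h : ∀ u v : Fin 32, myG.Adj u v →
        (fun v : Fin 32 => if v.val < 12 ∨ 28 ≤ v.val then (0 : Fin 2) else 1) u ≠
        (fun v : Fin 32 => if v.val < 12 ∨ 28 ≤ v.val then (0 : Fin 2) else 1) v := by decide
    exact fun {u v} hadj => h u v hadj
  · rw [annNum_myG, indepNum_myG, matchNum_myG]
    norm_num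

end AnnPaper
end

section
/- For every tree T, a(T) ≤ (3/2)α(T) - 1/2, i.e., 2a(T) ≤ 3α(T) - 1. -/
open Finset

namespace AnnPaper

variable {V : Type*}

lemma indep_card_le_indepNum [Fintype V] (T : SimpleGraph V) {s : Finset V}
    (hs : IsIndepFinset T s) : s.card ≤ indepNum T := by
  apply le_csSup
  · exact ⟨Fintype.card V, fun k hk => by
      obtain ⟨t, _, rfl⟩ := hk; exact t.card_le_univ⟩
  · exact ⟨s, hs, rfl⟩

/-- In a tree, one of the two parity classes (w.r.t. path length from a root) is an
independent set of size at least half the vertices. -/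
lemma tree_exists_big_indep [Fintype V] (T : SimpleGraph V) (hT : T.IsTree) :
    ∃ s : Finset V, IsIndepFinset T s ∧ Fintype.card V ≤ 2 * s.card := by
  classical
  obtain ⟨r⟩ := hT.isConnected.nonempty
  choose f hf hf' using (hT.existsUnique_path r)
  have main : ∀ u v, T.Adj u v →
      (f v).length = (f u).length + 1 ∨ (f u).length = (f v).length + 1 := by
    intro u v h
    by_cases hv : v ∈ (f u).support
    · right
      have hdrop : ((f u).dropUntil v hv).IsPath := (hf u).dropUntil hv
      have hcons : (SimpleGraph.Walk.cons h.symm SimpleGraph.Walk.nil : T.Walk v u).IsPath := by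
        simp [SimpleGraph.Walk.cons_isPath_iff, h.ne']
      have hd := (hT.existsUnique_path v u).unique hdrop hcons
      have hlen := congrArg SimpleGraph.Walk.length ((f u).take_spec hv)
      rw [SimpleGraph.Walk.length_append, hd] at hlen
      have htake := hf' v ((f u).takeUntil v hv) ((hf u).takeUntil hv)
      rw [htake] at hlen
      simp only [SimpleGraph.Walk.length_cons, SimpleGraph.Walk.length_nil] at hlen
      omega
    · left
      have hcons : (SimpleGraph.Walk.cons h.symm (f u).reverse).IsPath := by
        rw [SimpleGraph.Walk.cons_isPath_iff]
        exact ⟨(hf u).reverse, by simpa using hv⟩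
      have heq := hf' v _ hcons.reverse
      have hlen := congrArg SimpleGraph.Walk.length heq
      simp only [SimpleGraph.Walk.length_reverse, SimpleGraph.Walk.length_cons] at hlen
      omega
  have key : ∀ u v, T.Adj u v → ¬ ((f u).length % 2 = (f v).length % 2) := by
    intro u v h
    rcases main u v h with h1 | h1 <;> omega
  set s1 : Finset V := Finset.univ.filter (fun v => (f v).length % 2 = 0) with hs1
  set s2 : Finset V := Finset.univ.filter (fun v => ¬ ((f v).length % 2 = 0)) with hs2
  have hsum : s1.card + s2.card = Fintype.card V := by
    rw [hs1, hs2, Finset.card_filter_add_card_filter_not, Finset.card_univ]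
  have hi1 : IsIndepFinset T s1 := by
    intro a ha b hb hadj
    rw [hs1, Finset.mem_filter] at ha hb
    exact key a b hadj (by omega)
  have hi2 : IsIndepFinset T s2 := by
    intro a ha b hb hadj
    rw [hs2, Finset.mem_filter] at ha hb
    exact key a b hadj (by omega)
  rcases le_total s1.card s2.card with hle | hle
  · exact ⟨s2, hi2, by omega⟩
  · exact ⟨s1, hi1, by omega⟩

lemma tree_deg_pos [Fintype V] (T : SimpleGraph V) (hT : T.IsTree)
    (hn : 2 ≤ Fintype.card V) (v : V) : 1 ≤ deg T v := by
  have : Nontrivial V := Fintype.one_lt_card_iff_nontrivial.mp hn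
  obtain ⟨w, hw⟩ := exists_ne v
  obtain ⟨p⟩ := hT.isConnected.preconnected v w
  have hne : (T.neighborSet v).Nonempty := by
    cases p with
    | nil => exact absurd rfl hw.symm
    | cons h q => exact ⟨_, h⟩
  rw [deg]
  exact (Set.ncard_pos (Set.toFinite _)).mpr hne

lemma tree_leaves_indep [Fintype V] (T : SimpleGraph V) (hT : T.IsTree)
    (hn : 3 ≤ Fintype.card V) :
    IsIndepFinset T (Finset.univ.filter (fun v => deg T v = 1)) := by
  classical
  intro u hu v hv hadj
  rw [Finset.mem_filter] at hu hv
  have hnu : T.neighborSet u = {v} := by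
    obtain ⟨a, ha⟩ := Set.ncard_eq_one.mp hu.2
    have : v ∈ T.neighborSet u := hadj
    rw [ha] at this ⊢
    rw [Set.mem_singleton_iff.mp this]
  have hnv : T.neighborSet v = {u} := by
    obtain ⟨a, ha⟩ := Set.ncard_eq_one.mp hv.2
    have : u ∈ T.neighborSet v := hadj.symm
    rw [ha] at this ⊢
    rw [Set.mem_singleton_iff.mp this]
  -- every vertex reachable from u lies in {u, v}
  have closure : ∀ (x y : V) (p : T.Walk x y), (x = u ∨ x = v) → (y = u ∨ y = v) := by
    intro x y p
    induction p with
    | nil => exact id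
    | cons h q ih =>
      intro hx
      apply ih
      rcases hx with hx | hx
      · rw [hx] at h
        have h3 := (T.mem_neighborSet _ _).mpr h
        rw [hnu, Set.mem_singleton_iff] at h3
        right; exact h3
      · rw [hx] at h
        have h3 := (T.mem_neighborSet _ _).mpr h
        rw [hnv, Set.mem_singleton_iff] at h3
        left; exact h3
  obtain ⟨w, hw⟩ : ∃ w, w ∉ ({u, v} : Finset V) := by
    by_contra hcon
    push_neg at hcon
    have hsub : (Finset.univ : Finset V) ⊆ {u, v} := fun x _ => hcon x
    have := Finset.card_le_card hsub
    rw [Finset.card_univ] at this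
    have h2 : ({u, v} : Finset V).card ≤ 2 := Finset.card_insert_le u {v} |>.trans (by simp)
    omega
  obtain ⟨p⟩ := hT.isConnected.preconnected u w
  have := closure u w p (Or.inl rfl)
  simp only [Finset.mem_insert, Finset.mem_singleton, not_or] at hw
  rcases this with h | h
  · exact hw.1 h
  · exact hw.2 h

lemma tree_edgeCount [Fintype V] (T : SimpleGraph V) (hT : T.IsTree) :
    edgeCount T + 1 = Fintype.card V := by
  classical
  have := hT.card_edgeFinset
  rw [edgeCount, Set.ncard_eq_toFinset_card']
  convert this using 2
  congr 1

theorem stmt11 {V : Type*} [Fintype V] (T : SimpleGraph V) (hT : T.IsTree) :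
    (annNum T : ℚ) ≤ 3 / 2 * (indepNum T : ℚ) - 1 / 2 := by
  classical
  have key : 2 * annNum T + 1 ≤ 3 * indepNum T := by
    obtain ⟨r⟩ := hT.isConnected.nonempty
    -- α ≥ 1
    have halpha1 : 1 ≤ indepNum T := by
      have : IsIndepFinset T {r} := by
        intro a ha b hb hadj
        simp only [Finset.mem_singleton] at ha hb
        subst ha; subst hb
        exact T.loopless.irrefl _ hadj
      simpa using indep_card_le_indepNum T this
    -- annNum attains its sup
    have hmem : annNum T ∈ {k | ∃ A : Finset V, A.card = k ∧ ∑ v ∈ A, deg T v ≤ edgeCount T} := by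
      apply Nat.sSup_mem
      · exact ⟨0, ⟨∅, by simp⟩⟩
      · exact ⟨Fintype.card V, fun k hk => by
          obtain ⟨A, rfl, _⟩ := hk; exact A.card_le_univ⟩
    obtain ⟨A, hAcard, hAsum⟩ := hmem
    have hm := tree_edgeCount T hT
    by_cases hbig : 3 ≤ Fintype.card V
    · -- main case
      have hdegpos : ∀ v : V, 1 ≤ deg T v := tree_deg_pos T hT (by omega)
      set L : Finset V := Finset.univ.filter (fun v => deg T v = 1) with hL
      -- 2 * |A| ≤ m + |L|
      have hmain : 2 * A.card ≤ edgeCount T + L.card := by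
        have hpoint : ∀ v ∈ A, 2 ≤ deg T v + (if deg T v = 1 then 1 else 0) := by
          intro v _
          have := hdegpos v
          have := hdegpos v
          split_ifs with h1 <;> omega
        have hstep : 2 * A.card ≤ ∑ v ∈ A, (deg T v + (if deg T v = 1 then 1 else 0)) := by
          calc 2 * A.card = ∑ _v ∈ A, 2 := by rw [Finset.sum_const, smul_eq_mul, mul_comm]
          _ ≤ _ := Finset.sum_le_sum hpoint
        rw [Finset.sum_add_distrib] at hstep
        have hind : ∑ v ∈ A, (if deg T v = 1 then 1 else 0) = (A.filter (fun v => deg T v = 1)).card := by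
          exact (Finset.card_filter _ _).symm
        have hsubL : (A.filter (fun v => deg T v = 1)).card ≤ L.card := by
          apply Finset.card_le_card
          intro x hx
          rw [Finset.mem_filter] at hx ⊢
          exact ⟨Finset.mem_univ x, hx.2⟩
        omega
      have hLa : L.card ≤ indepNum T :=
        indep_card_le_indepNum T (tree_leaves_indep T hT hbig)
      obtain ⟨s, hsind, hscard⟩ := tree_exists_big_indep T hT
      have hsa : s.card ≤ indepNum T := indep_card_le_indepNum T hsind
      omega
    · -- small cases: card V ≤ 2, show annNum T ≤ 1
      have hann : annNum T ≤ 1 := by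
        have hAV : A.card ≤ Fintype.card V := A.card_le_univ
        rcases Nat.lt_or_ge (Fintype.card V) 2 with h2 | h2
        · omega
        · -- card V = 2, edgeCount = 1
          have hdegpos : ∀ v : V, 1 ≤ deg T v := tree_deg_pos T hT h2
          have hge : A.card ≤ ∑ v ∈ A, deg T v := by
            calc A.card = ∑ _v ∈ A, 1 := by simp
            _ ≤ _ := Finset.sum_le_sum (fun v _ => hdegpos v)
          omega
      omega
  have h1 : (2 * annNum T + 1 : ℚ) ≤ 3 * indepNum T := by exact_mod_cast key
  linarith

end AnnPaper
end

section
/- For every bipartite graph G with μ(G) > 0, a(G) - α(G) ≤ 2 + μ(G) - 2√(1 + μ(G)). -/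
open Finset

namespace AnnPaper

variable {V : Type*}

/-! ### Auxiliary lemmas -/

lemma fin2_cases : ∀ i : Fin 2, i = 0 ∨ i = 1 := by decide

lemma four_mul_le_sq (a b : ℕ) : 4 * (a * b) ≤ (a + b) ^ 2 := by
  have h : (0:ℤ) ≤ ((a:ℤ) - b)^2 := sq_nonneg _
  zify
  nlinarith [h]

lemma deg_eq_s13 [Fintype V] [DecidableEq V] (G : SimpleGraph V) [DecidableRel G.Adj] (v : V) :
    deg G v = G.degree v := by
  rw [deg, show G.degree v = (G.neighborFinset v).card from rfl, ← Set.ncard_coe_finset]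
  congr 1
  simp [SimpleGraph.neighborFinset_def]

lemma edgeCount_eq_s13 [Fintype V] [DecidableEq V] (G : SimpleGraph V) [DecidableRel G.Adj] :
    edgeCount G = G.edgeFinset.card := by
  rw [edgeCount, ← SimpleGraph.coe_edgeFinset, Set.ncard_coe_finset]

lemma le_indepNum [Fintype V] (G : SimpleGraph V) {s : Finset V} (h : IsIndepFinset G s) :
    s.card ≤ indepNum G :=
  le_csSup ⟨Fintype.card V, by rintro k ⟨s, -, rfl⟩; exact s.card_le_univ⟩ ⟨s, h, rfl⟩

lemma le_matchNum [Fintype V] (G : SimpleGraph V) {s : Finset (Sym2 V)}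
    (h : IsMatchingFinset G s) : s.card ≤ matchNum G := by
  classical
  exact le_csSup ⟨(univ : Finset (Sym2 V)).card, by rintro k ⟨s, -, rfl⟩; exact s.card_le_univ⟩
    ⟨s, h, rfl⟩

lemma matchNum_spec [Fintype V] (G : SimpleGraph V) :
    ∃ M : Finset (Sym2 V), IsMatchingFinset G M ∧ M.card = matchNum G := by
  classical
  have h : matchNum G ∈ {k | ∃ s : Finset (Sym2 V), IsMatchingFinset G s ∧ s.card = k} := by
    apply Nat.sSup_mem
    · exact ⟨0, ∅, ⟨by simp, by simp⟩, rfl⟩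
    · exact ⟨(univ : Finset (Sym2 V)).card, by rintro k ⟨s, -, rfl⟩; exact s.card_le_univ⟩
  obtain ⟨M, hM, hMc⟩ := h
  exact ⟨M, hM, hMc⟩

lemma annNum_spec [Fintype V] (G : SimpleGraph V) :
    ∃ A : Finset V, A.card = annNum G ∧ ∑ v ∈ A, deg G v ≤ edgeCount G := by
  have h : annNum G ∈ {k | ∃ A : Finset V, A.card = k ∧ ∑ v ∈ A, deg G v ≤ edgeCount G} := by
    apply Nat.sSup_mem
    · exact ⟨0, ∅, by simp, by simp⟩
    · exact ⟨Fintype.card V, by rintro k ⟨A, rfl, -⟩; exact A.card_le_univ⟩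
  obtain ⟨A, hA1, hA2⟩ := h
  exact ⟨A, hA1, hA2⟩

/-! ### König–Egerváry via Hall's theorem -/

lemma konig [Fintype V] (G : SimpleGraph V) (hbip : G.Colorable 2) :
    Fintype.card V ≤ indepNum G + matchNum G := by
  classical
  obtain ⟨c⟩ := hbip
  set X : Finset V := univ.filter (fun v => c v = 0) with hX
  set Y : Finset V := univ.filter (fun v => ¬ c v = 0) with hY
  have hXYcard : X.card + Y.card = Fintype.card V := by
    rw [hX, hY, card_filter_add_card_filter_not, card_univ]
  have hcolX : ∀ v ∈ X, c v = 0 := fun v hv => (mem_filter.1 hv).2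
  have hcolY : ∀ v ∈ Y, c v ≠ 0 := fun v hv => (mem_filter.1 hv).2
  set N : Finset V → Finset V := fun S => S.biUnion (fun v => G.neighborFinset v) with hN
  set d : ℕ := X.powerset.sup (fun S => S.card - (N S).card) with hd
  have hdle : ∀ S ⊆ X, S.card ≤ (N S).card + d := by
    intro S hS
    have h := Finset.le_sup (f := fun S => S.card - (N S).card) (mem_powerset.2 hS)
    omega
  set tfun : {x : V // x ∈ X} → Finset (V ⊕ Fin d) :=
    fun x => ((G.neighborFinset x.1).image Sum.inl) ∪ ((univ : Finset (Fin d)).image Sum.inr)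
    with htfun
  have hHall : ∀ s : Finset {x : V // x ∈ X}, s.card ≤ (s.biUnion tfun).card := by
    intro s
    rcases s.eq_empty_or_nonempty with rfl | ⟨x₀, hx₀⟩
    · simp
    set S : Finset V := s.image Subtype.val with hS
    have hSX : S ⊆ X := by
      intro v hv
      obtain ⟨x, hx, rfl⟩ := mem_image.1 hv
      exact x.2
    have hScard : S.card = s.card := card_image_of_injective _ Subtype.val_injective
    have hsub : (N S).image Sum.inl ∪ ((univ : Finset (Fin d)).image Sum.inr) ⊆
        s.biUnion tfun := by
      intro z hz
      rcases mem_union.1 hz with hz | hz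
      · obtain ⟨v, hv, rfl⟩ := mem_image.1 hz
        obtain ⟨u, hu, hvu⟩ := mem_biUnion.1 hv
        obtain ⟨x, hx, rfl⟩ := mem_image.1 hu
        exact mem_biUnion.2 ⟨x, hx, mem_union_left _ (mem_image_of_mem _ hvu)⟩
      · exact mem_biUnion.2 ⟨x₀, hx₀, mem_union_right _ hz⟩
    have hdisj : Disjoint ((N S).image Sum.inl) ((univ : Finset (Fin d)).image Sum.inr) := by
      simp [Finset.disjoint_left]
    have hcard2 : (N S).card + d ≤ (s.biUnion tfun).card := by
      have h := card_le_card hsub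
      rwa [card_union_of_disjoint hdisj, card_image_of_injective _ Sum.inl_injective,
        card_image_of_injective _ Sum.inr_injective, card_univ, Fintype.card_fin] at h
    calc s.card = S.card := hScard.symm
      _ ≤ (N S).card + d := hdle S hSX
      _ ≤ _ := hcard2
  obtain ⟨f, hfinj, hft⟩ := (Finset.all_card_le_biUnion_card_iff_exists_injective tfun).1 hHall
  set K : Finset {x : V // x ∈ X} := univ.filter (fun x => (f x).isLeft) with hK
  set vf : {x : V // x ∈ X} → V := fun x => Sum.elim id (fun _ => (x : V)) (f x) with hvf
  have hfK : ∀ x ∈ K, f x = Sum.inl (vf x) := by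
    intro x hx
    have h : (f x).isLeft := (mem_filter.1 hx).2
    rcases hfx : f x with v | b
    · simp [hvf, hfx]
    · rw [hfx] at h; simp at h
  have hadj : ∀ x ∈ K, G.Adj x.1 (vf x) := by
    intro x hx
    have h1 := hft x
    rw [hfK x hx] at h1
    rcases mem_union.1 h1 with h | h
    · obtain ⟨v, hv, he⟩ := mem_image.1 h
      have hveq : v = vf x := Sum.inl_injective he
      rw [← hveq]
      exact (SimpleGraph.mem_neighborFinset _ _ _).1 hv
    · obtain ⟨b, -, he⟩ := mem_image.1 h
      exact absurd he (by simp)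
  have hvfY : ∀ x ∈ K, c (vf x) ≠ 0 := by
    intro x hx h0
    exact c.valid (hadj x hx) (by rw [hcolX x.1 x.2, h0])
  set M₀ : Finset (Sym2 V) := K.image (fun x : {x : V // x ∈ X} => s(x.1, vf x)) with hM₀
  have hinjM : Set.InjOn (fun x : {x : V // x ∈ X} => s(x.1, vf x)) (↑K : Set {x : V // x ∈ X}) := by
    intro x hx y hy he
    simp only [Sym2.eq_iff] at he
    rcases he with ⟨h1, _⟩ | ⟨h1, h2⟩
    · exact Subtype.ext h1
    · exfalso
      exact hvfY y (by rwa [mem_coe] at hy) (by rw [← h1]; exact hcolX x.1 x.2)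
  have hM₀card : M₀.card = K.card := by rw [hM₀]; exact card_image_of_injOn hinjM
  have hmatch : IsMatchingFinset G M₀ := by
    constructor
    · intro e he
      rw [mem_coe] at he
      obtain ⟨x, hx, rfl⟩ := mem_image.1 he
      exact (SimpleGraph.mem_edgeSet G).2 (hadj x hx)
    · intro e he f' hf' hne v hve hvf'
      obtain ⟨x, hx, rfl⟩ := mem_image.1 he
      obtain ⟨y, hy, rfl⟩ := mem_image.1 hf'
      rw [Sym2.mem_iff] at hve hvf'
      have hx0 : c x.1 = 0 := hcolX x.1 x.2
      have hy0 : c y.1 = 0 := hcolX y.1 y.2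
      have hxv : c (vf x) ≠ 0 := hvfY x hx
      have hyv : c (vf y) ≠ 0 := hvfY y hy
      rcases hve with rfl | rfl
      · rcases hvf' with h | h
        · exact hne (by rw [Subtype.ext h])
        · exact hyv (by rw [← h]; exact hx0)
      · rcases hvf' with h | h
        · exact hxv (by rw [h]; exact hy0)
        · have hxy : x = y := by
            apply hfinj
            rw [hfK x hx, hfK y hy, h]
          exact hne (by rw [hxy])
  have hμ : K.card ≤ matchNum G := hM₀card ▸ le_matchNum G hmatch
  have hKd : X.card ≤ K.card + d := by
    have hsplit : K.card + (univ.filter (fun x : {x : V // x ∈ X} => ¬ (f x).isLeft)).card =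
        Fintype.card {x : V // x ∈ X} := by
      rw [hK, card_filter_add_card_filter_not, card_univ]
    have hKc : (univ.filter (fun x : {x : V // x ∈ X} => ¬ (f x).isLeft)).card ≤ d := by
      have hmaps : ∀ x ∈ univ.filter (fun x : {x : V // x ∈ X} => ¬ (f x).isLeft),
          f x ∈ (univ : Finset (Fin d)).image Sum.inr := by
        intro x hx
        have h := (mem_filter.1 hx).2
        rcases hfx : f x with v | b
        · rw [hfx] at h; simp at h
        · exact mem_image_of_mem _ (mem_univ b)
      have h := card_le_card_of_injOn f hmaps (hfinj.injOn)
      rwa [card_image_of_injective _ Sum.inr_injective, card_univ, Fintype.card_fin] at h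
    rw [Fintype.card_coe] at hsplit
    omega
  have hα : Y.card + d ≤ indepNum G := by
    rcases Nat.eq_zero_or_pos d with hd0 | hdpos
    · have hind : IsIndepFinset G Y := by
        intro a ha b hb hab
        have h1 := hcolY a ha
        have h2 := hcolY b hb
        have := c.valid hab
        rcases fin2_cases (c a) with h | h
        · exact h1 h
        · rcases fin2_cases (c b) with h' | h'
          · exact h2 h'
          · exact this (by rw [h, h'])
      have := le_indepNum G hind
      omega
    · obtain ⟨S₀, hS₀mem, hS₀⟩ := Finset.exists_mem_eq_sup X.powerset
        ⟨∅, empty_mem_powerset X⟩ (fun S => S.card - (N S).card)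
      have hS₀X : S₀ ⊆ X := mem_powerset.1 hS₀mem
      rw [← hd] at hS₀
      have hNlt : (N S₀).card < S₀.card := by omega
      have hNS₀Y : N S₀ ⊆ Y := by
        intro v hv
        obtain ⟨u, hu, hvu⟩ := mem_biUnion.1 hv
        have hadj' : G.Adj u v := (SimpleGraph.mem_neighborFinset _ _ _).1 hvu
        have hcu : c u = 0 := hcolX u (hS₀X hu)
        rw [hY, mem_filter]
        exact ⟨mem_univ v, fun h0 => c.valid hadj' (by rw [hcu, h0])⟩
      set I : Finset V := S₀ ∪ (Y \ N S₀) with hI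
      have hIind : IsIndepFinset G I := by
        intro a ha b hb hab
        rcases mem_union.1 ha with ha' | ha' <;> rcases mem_union.1 hb with hb' | hb'
        · exact c.valid hab (by rw [hcolX a (hS₀X ha'), hcolX b (hS₀X hb')])
        · exact (mem_sdiff.1 hb').2 (mem_biUnion.2 ⟨a, ha',
            (SimpleGraph.mem_neighborFinset _ _ _).2 hab⟩)
        · exact (mem_sdiff.1 ha').2 (mem_biUnion.2 ⟨b, hb',
            (SimpleGraph.mem_neighborFinset _ _ _).2 hab.symm⟩)
        · have h1 := hcolY a (mem_sdiff.1 ha').1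
          have h2 := hcolY b (mem_sdiff.1 hb').1
          have := c.valid hab
          rcases fin2_cases (c a) with h | h
          · exact h1 h
          · rcases fin2_cases (c b) with h' | h'
            · exact h2 h'
            · exact this (by rw [h, h'])
      have hIdisj : Disjoint S₀ (Y \ N S₀) := by
        rw [Finset.disjoint_left]
        intro a ha ha'
        exact hcolY a (mem_sdiff.1 ha').1 (hcolX a (hS₀X ha))
      have hIcard : I.card = S₀.card + (Y.card - (N S₀).card) := by
        rw [hI, card_union_of_disjoint hIdisj, card_sdiff_of_subset hNS₀Y]
      have hNY : (N S₀).card ≤ Y.card := card_le_card hNS₀Y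
      have := le_indepNum G hIind
      omega
  omega

/-! ### The counting lemma -/

lemma count [Fintype V] (G : SimpleGraph V) (hbip : G.Colorable 2) (hmu : 0 < matchNum G) :
    ∃ t : ℕ, annNum G + t = Fintype.card V ∧ 4 * matchNum G ≤ t ^ 2 + 4 * t := by
  classical
  obtain ⟨c⟩ := hbip
  obtain ⟨A, hAcard, hAsum⟩ := annNum_spec G
  obtain ⟨M, hMmatch, hMcard⟩ := matchNum_spec G
  refine ⟨Aᶜ.card, by rw [← hAcard]; exact card_add_card_compl A, ?_⟩
  set B : Finset V := Aᶜ with hB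
  set t : ℕ := B.card with ht
  have hAsum' : ∑ v ∈ A, G.degree v ≤ G.edgeFinset.card := by
    rw [← edgeCount_eq_s13]
    calc ∑ v ∈ A, G.degree v = ∑ v ∈ A, deg G v := by
          exact Finset.sum_congr rfl (fun v _ => (deg_eq_s13 G v).symm)
      _ ≤ edgeCount G := hAsum
  set EA : Finset (Sym2 V) := G.edgeFinset.filter (fun e => ∀ v ∈ e, v ∈ A) with hEA
  set Em : Finset (Sym2 V) := G.edgeFinset.filter (fun e => ∃ v ∈ e, v ∈ A) with hEm
  set EB : Finset (Sym2 V) := G.edgeFinset.filter (fun e => ¬ ∃ v ∈ e, v ∈ A) with hEB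
  have hsplit : Em.card + EB.card = G.edgeFinset.card := by
    rw [hEm, hEB, card_filter_add_card_filter_not]
  have hdc : ∑ v ∈ A, G.degree v = ∑ e ∈ G.edgeFinset, (A.filter (fun v => v ∈ e)).card := by
    have hdeg : ∀ v, G.degree v = (G.edgeFinset.filter (fun e => v ∈ e)).card := by
      intro v
      rw [← G.incidenceFinset_eq_filter, G.card_incidenceFinset_eq_degree]
    simp only [hdeg, card_filter]
    exact Finset.sum_comm
  have hEAEm : EA ⊆ Em := by
    intro e he
    rw [hEA, mem_filter] at he
    rw [hEm, mem_filter]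
    obtain ⟨x, hx⟩ : ∃ x, x ∈ e := ⟨e.out.1, Sym2.out_fst_mem e⟩
    exact ⟨he.1, x, hx, he.2 x hx⟩
  have h2 : ∀ e ∈ EA, 2 ≤ (A.filter (fun v => v ∈ e)).card := by
    intro e he
    rw [hEA, mem_filter] at he
    obtain ⟨heE, hall⟩ := he
    rw [SimpleGraph.mem_edgeFinset] at heE
    induction e using Sym2.ind with
    | _ x y =>
      have hadj : G.Adj x y := heE
      have hne : x ≠ y := G.ne_of_adj hadj
      have hsub : ({x, y} : Finset V) ⊆ A.filter (fun v => v ∈ s(x, y)) := by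
        intro v hv
        rcases mem_insert.1 hv with rfl | hv
        · exact mem_filter.2 ⟨hall v (by simp), by simp⟩
        · rw [mem_singleton.1 hv]
          exact mem_filter.2 ⟨hall y (by simp), by simp⟩
      calc 2 = ({x, y} : Finset V).card := (card_pair hne).symm
        _ ≤ _ := card_le_card hsub
  have h1 : ∀ e ∈ Em, 1 ≤ (A.filter (fun v => v ∈ e)).card := by
    intro e he
    rw [hEm, mem_filter] at he
    obtain ⟨-, x, hx, hxA⟩ := he
    exact card_pos.2 ⟨x, mem_filter.2 ⟨hxA, hx⟩⟩
  have hi : EA.card + Em.card ≤ ∑ v ∈ A, G.degree v := by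
    rw [hdc]
    have hstep1 : ∑ e ∈ Em, (A.filter (fun v => v ∈ e)).card ≤
        ∑ e ∈ G.edgeFinset, (A.filter (fun v => v ∈ e)).card :=
      sum_le_sum_of_subset (by rw [hEm]; exact filter_subset _ _)
    have hsd : ∑ e ∈ Em \ EA, (A.filter (fun v => v ∈ e)).card +
        ∑ e ∈ EA, (A.filter (fun v => v ∈ e)).card =
        ∑ e ∈ Em, (A.filter (fun v => v ∈ e)).card := sum_sdiff hEAEm
    have hb1 : EA.card • 2 ≤ ∑ e ∈ EA, (A.filter (fun v => v ∈ e)).card :=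
      card_nsmul_le_sum _ _ _ h2
    have hb2 : (Em \ EA).card • 1 ≤ ∑ e ∈ Em \ EA, (A.filter (fun v => v ∈ e)).card :=
      card_nsmul_le_sum _ _ _ (fun e he => h1 e (mem_sdiff.1 he).1)
    have hcsd : (Em \ EA).card = Em.card - EA.card := card_sdiff_of_subset hEAEm
    have hle : EA.card ≤ Em.card := card_le_card hEAEm
    simp only [smul_eq_mul, mul_one, mul_two] at hb1 hb2
    omega
  have hEAB : EA.card ≤ EB.card := by omega
  -- bipartite bound on EB
  set B0 : Finset V := B.filter (fun v => c v = 0) with hB0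
  set B1 : Finset V := B.filter (fun v => ¬ c v = 0) with hB1
  have hB01 : B0.card + B1.card = t := by
    rw [hB0, hB1, card_filter_add_card_filter_not]
  have hememB : ∀ e ∈ EB, ∀ v ∈ e, v ∈ B := by
    intro e he v hv
    rw [hEB, mem_filter] at he
    have := he.2
    push_neg at this
    rw [hB, mem_compl]
    exact this v hv
  have hEBsub : EB ⊆ B0.biUnion (fun v => EB.filter (fun e => v ∈ e)) := by
    intro e he
    have heE : e ∈ G.edgeFinset := by rw [hEB] at he; exact (mem_filter.1 he).1
    rw [SimpleGraph.mem_edgeFinset] at heE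
    induction e using Sym2.ind with
    | _ x y =>
      have hadj : G.Adj x y := heE
      have hxB : x ∈ B := hememB _ he x (by simp)
      have hyB : y ∈ B := hememB _ he y (by simp)
      have hner : c x ≠ c y := c.valid hadj
      rcases fin2_cases (c x) with hcx | hcx
      · exact mem_biUnion.2 ⟨x, mem_filter.2 ⟨hxB, hcx⟩, mem_filter.2 ⟨he, by simp⟩⟩
      · have hcy : c y = 0 := by
          rcases fin2_cases (c y) with h | h
          · exact h
          · exact absurd (hcx.trans h.symm) hner
        exact mem_biUnion.2 ⟨y, mem_filter.2 ⟨hyB, hcy⟩, mem_filter.2 ⟨he, by simp⟩⟩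
  have hfiber : ∀ v ∈ B0, (EB.filter (fun e => v ∈ e)).card ≤ B1.card := by
    intro v hv
    have hcv : c v = 0 := (mem_filter.1 hv).2
    apply card_le_card_of_injOn (fun e => if h : v ∈ e then Sym2.Mem.other' h else v)
    · intro e he
      rw [mem_coe, mem_filter] at he
      obtain ⟨heEB, hve⟩ := he
      simp only [dif_pos hve, mem_coe]
      have hoe : Sym2.Mem.other' hve ∈ e := Sym2.other_mem' hve
      have hoB : Sym2.Mem.other' hve ∈ B := hememB e heEB _ hoe
      have hadj : G.Adj v (Sym2.Mem.other' hve) := by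
        have hspec : s(v, Sym2.Mem.other' hve) = e := Sym2.other_spec' hve
        have heE : e ∈ G.edgeSet := by
          rw [hEB] at heEB
          exact (SimpleGraph.mem_edgeFinset).1 (mem_filter.1 heEB).1
        rw [← hspec] at heE
        exact heE
      refine mem_filter.2 ⟨hoB, fun h0 => c.valid hadj ?_⟩
      rw [hcv, h0]
    · intro e1 h1 e2 h2 heq
      rw [mem_coe, mem_filter] at h1 h2
      have hv1 := h1.2
      have hv2 := h2.2
      simp only [dif_pos hv1, dif_pos hv2] at heq
      rw [← Sym2.other_spec' hv1, ← Sym2.other_spec' hv2, heq]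
  have hEBcard : EB.card ≤ B0.card * B1.card := by
    calc EB.card ≤ (B0.biUnion (fun v => EB.filter (fun e => v ∈ e))).card :=
          card_le_card hEBsub
      _ ≤ ∑ v ∈ B0, (EB.filter (fun e => v ∈ e)).card := card_biUnion_le
      _ ≤ ∑ _v ∈ B0, B1.card := sum_le_sum hfiber
      _ = B0.card * B1.card := by rw [sum_const, smul_eq_mul]
  have hmantel : 4 * EB.card ≤ t ^ 2 := by
    calc 4 * EB.card ≤ 4 * (B0.card * B1.card) := by omega
      _ ≤ (B0.card + B1.card) ^ 2 := four_mul_le_sq _ _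
      _ = t ^ 2 := by rw [hB01]
  -- matching split
  have hMsub : M ⊆ G.edgeFinset := fun e he =>
    (SimpleGraph.mem_edgeFinset).2 (hMmatch.1 (Finset.mem_coe.2 he))
  set MA : Finset (Sym2 V) := M.filter (fun e => ∀ v ∈ e, v ∈ A) with hMA
  set Mr : Finset (Sym2 V) := M.filter (fun e => ¬ ∀ v ∈ e, v ∈ A) with hMr
  have hMsplit : MA.card + Mr.card = M.card := by
    rw [hMA, hMr, card_filter_add_card_filter_not]
  have hMAEA : MA.card ≤ EA.card := by
    apply card_le_card
    intro e he
    rw [hMA, mem_filter] at he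
    exact mem_filter.2 ⟨hMsub he.1, he.2⟩
  have hMne : M.Nonempty := card_pos.1 (by omega)
  obtain ⟨e₀, he₀⟩ := hMne
  have hVne : Nonempty V := ⟨e₀.out.1⟩
  obtain ⟨v₀⟩ := hVne
  have hMrB : Mr.card ≤ B.card := by
    apply card_le_card_of_injOn (fun e => if h : ∃ v ∈ e, v ∈ B then h.choose else v₀)
    · intro e he
      simp only [mem_coe, hMr, mem_filter] at he
      have hx := he.2
      push_neg at hx
      obtain ⟨w, hw1, hw2⟩ := hx
      have hex : ∃ v ∈ e, v ∈ B := ⟨w, hw1, by rw [hB, mem_compl]; exact hw2⟩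
      simp only [dif_pos hex, mem_coe]
      exact hex.choose_spec.2
    · intro e1 h1 e2 h2 heq
      simp only [mem_coe, hMr, mem_filter] at h1 h2
      by_contra hne
      have hx1 := h1.2; push_neg at hx1
      have hx2 := h2.2; push_neg at hx2
      obtain ⟨w1, hw11, hw12⟩ := hx1
      obtain ⟨w2, hw21, hw22⟩ := hx2
      have hex1 : ∃ v ∈ e1, v ∈ B := ⟨w1, hw11, by rw [hB, mem_compl]; exact hw12⟩
      have hex2 : ∃ v ∈ e2, v ∈ B := ⟨w2, hw21, by rw [hB, mem_compl]; exact hw22⟩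
      simp only [dif_pos hex1, dif_pos hex2] at heq
      exact hMmatch.2 e1 h1.1 e2 h2.1 hne hex1.choose hex1.choose_spec.1
        (heq ▸ hex2.choose_spec.1)
  have hmain : 4 * matchNum G ≤ t ^ 2 + 4 * t := by
    have h4 : matchNum G = MA.card + Mr.card := by omega
    have : 4 * matchNum G ≤ 4 * EA.card + 4 * t := by
      rw [h4, ht]
      omega
    calc 4 * matchNum G ≤ 4 * EA.card + 4 * t := this
      _ ≤ 4 * EB.card + 4 * t := by omega
      _ ≤ t ^ 2 + 4 * t := by omega
  exact hmain

theorem stmt13 {V : Type*} [Fintype V] (G : SimpleGraph V) (hbip : G.Colorable 2)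
    (hmu : 0 < matchNum G) :
    (annNum G : ℝ) - (indepNum G : ℝ) ≤
      2 + (matchNum G : ℝ) - 2 * Real.sqrt (1 + (matchNum G : ℝ)) := by
  have hkon := konig G hbip
  obtain ⟨t, hts, hct⟩ := count G hbip hmu
  have h1 : (annNum G : ℝ) + t = Fintype.card V := by exact_mod_cast congrArg (Nat.cast : ℕ → ℝ) hts
  have h2 : (Fintype.card V : ℝ) ≤ (indepNum G : ℝ) + (matchNum G : ℝ) := by exact_mod_cast hkon
  have h3 : 4 * (matchNum G : ℝ) ≤ (t : ℝ) ^ 2 + 4 * t := by exact_mod_cast hct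
  have ht0 : (0 : ℝ) ≤ t := Nat.cast_nonneg t
  have hsq : Real.sqrt (1 + (matchNum G : ℝ)) ≤ ((t : ℝ) + 2) / 2 := by
    rw [show ((t : ℝ) + 2) / 2 = Real.sqrt ((((t : ℝ) + 2) / 2) ^ 2) from
      (Real.sqrt_sq (by positivity)).symm]
    apply Real.sqrt_le_sqrt
    nlinarith [h3]
  linarith [hsq,h1]

end AnnPaper
end
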